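/- The sequence of harmonic numbers h(n) = ∑_{i=1}^n 1/i is not C-finite: it satisfies no linear recurrence with constant rational coefficients, i.e., there are no d ≥ 1 and c₀,…,c_{d−1} ∈ ℚ with h(n+d) = c_{d−1}h(n+d−1) + ⋯ + c₀h(n) for all n. -/

import Mathlib

open Polynomial Finset

/-- The harmonic numbers are not C-finite over ℚ. -/
theorem harmonic_not_cfinite
    (h : ℕ → ℚ) (hh : ∀ n, h n = ∑ i ∈ Finset.range n, (1 : ℚ) / (i + 1)) :
    ¬ ∃ d : ℕ, 1 ≤ d ∧ ∃ c : Fin d → ℚ,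
      ∀ n : ℕ, h (n + d) = ∑ i : Fin d, c i * h (n + i) := by
  rintro ⟨d, hd, c, hc⟩
  -- difference of consecutive harmonic numbers
  have hdiff : ∀ n k : ℕ, h (n + 1 + k) - h (n + k) = 1 / ((n : ℚ) + k + 1) := by
    intro n k
    have e : n + 1 + k = (n + k) + 1 := by ring
    rw [e, hh, hh, Finset.sum_range_succ]
    push_cast
    ring
  -- the key rational identity
  have key : ∀ n : ℕ, (1 : ℚ) / ((n : ℚ) + d + 1)
      = ∑ i : Fin d, c i * (1 / ((n : ℚ) + i + 1)) := by
    intro n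
    have h1 := hc (n + 1)
    have h2 := hc n
    have h3 : h (n + 1 + d) - h (n + d)
        = ∑ i : Fin d, c i * (h (n + 1 + i) - h (n + i)) := by
      rw [h1, h2, ← Finset.sum_sub_distrib]
      exact Finset.sum_congr rfl (fun i _ => (mul_sub _ _ _).symm)
    rw [hdiff n d] at h3
    rw [h3]
    exact Finset.sum_congr rfl (fun i _ => by rw [hdiff n i])
  -- cleared-denominator identity at every natural point
  have prodkey : ∀ n : ℕ,
      (∏ j ∈ (Finset.range (d+1)).erase d, ((n : ℚ) + j + 1))
        = ∑ i : Fin d, c i * ∏ j ∈ (Finset.range (d+1)).erase (i : ℕ), ((n : ℚ) + j + 1) := by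
    intro n
    set f : ℕ → ℚ := fun j => (n : ℚ) + j + 1 with hf
    have hfne : ∀ k : ℕ, f k ≠ 0 := by
      intro k
      have : (0 : ℚ) < (n : ℚ) + k + 1 := by positivity
      exact ne_of_gt this
    set D : ℚ := ∏ j ∈ Finset.range (d+1), f j with hD
    have hmul : ∀ k ∈ Finset.range (d+1),
        (1 / f k) * D = ∏ j ∈ (Finset.range (d+1)).erase k, f j := by
      intro k hk
      rw [hD, ← Finset.mul_prod_erase _ f hk]
      field_simp
      exact mul_div_cancel_left₀ _ (hfne k)
    have hkey := key n
    have := congrArg (· * D) hkey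
    simp only [Finset.sum_mul, mul_assoc] at this
    rw [hmul d (by simp)] at this
    rw [this]
    refine Finset.sum_congr rfl (fun i _ => ?_)
    rw [hmul (i : ℕ) (by simp [Nat.lt_succ_of_lt i.isLt])]
  -- polynomial identity
  set P : Polynomial ℚ :=
      (∏ j ∈ (Finset.range (d+1)).erase d, (Polynomial.X + Polynomial.C ((j : ℚ) + 1)))
      - ∑ i : Fin d, Polynomial.C (c i)
          * ∏ j ∈ (Finset.range (d+1)).erase (i : ℕ),
              (Polynomial.X + Polynomial.C ((j : ℚ) + 1)) with hP
  have hroot : ∀ n : ℕ, P.eval (n : ℚ) = 0 := by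
    intro n
    rw [hP]
    simp only [Polynomial.eval_sub, Polynomial.eval_prod, Polynomial.eval_finset_sum,
      Polynomial.eval_mul, Polynomial.eval_C, Polynomial.eval_add, Polynomial.eval_X]
    have := prodkey n
    rw [sub_eq_zero]
    convert this using 2 <;> simp [add_assoc]
  have hP0 : P = 0 := by
    apply Polynomial.eq_zero_of_infinite_isRoot
    apply Set.Infinite.mono (s := Set.range (fun n : ℕ => (n : ℚ)))
    · rintro x ⟨n, rfl⟩; exact hroot n
    · exact Set.infinite_range_of_injective Nat.cast_injective
  -- evaluate at -(d+1)
  have heval := congrArg (Polynomial.eval (-(d : ℚ) - 1)) hP0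
  rw [hP] at heval
  simp only [Polynomial.eval_sub, Polynomial.eval_prod, Polynomial.eval_finset_sum,
    Polynomial.eval_mul, Polynomial.eval_C, Polynomial.eval_add, Polynomial.eval_X,
    Polynomial.eval_zero] at heval
  have hsum0 : ∀ i : Fin d,
      (∏ j ∈ (Finset.range (d+1)).erase (i : ℕ), ((-(d : ℚ) - 1) + ((j : ℚ) + 1))) = 0 := by
    intro i
    apply Finset.prod_eq_zero (i := d)
    · exact Finset.mem_erase.2 ⟨(Nat.ne_of_lt i.isLt).symm, by simp⟩
    · ring
  have hprodne : (∏ j ∈ (Finset.range (d+1)).erase d, ((-(d : ℚ) - 1) + ((j : ℚ) + 1))) ≠ 0 := by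
    rw [Finset.prod_ne_zero_iff]
    intro j hj
    obtain ⟨hjne, hjmem⟩ := Finset.mem_erase.1 hj
    have hjlt : j < d := lt_of_le_of_ne (Nat.lt_succ_iff.1 (Finset.mem_range.1 hjmem)) hjne
    have : ((j : ℚ)) < (d : ℚ) := by exact_mod_cast hjlt
    intro hcontra
    have : ((j : ℚ)) = (d : ℚ) := by linarith [hcontra]
    linarith
  rw [Finset.sum_congr rfl (fun i _ => by rw [hsum0 i, mul_zero])] at heval
  rw [Finset.sum_const_zero, sub_zero] at heval
  exact hprodne heval
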